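/- The post-selected event of the Frauchiger–Renner paradox has probability 1/12: let ψ^{t=2} = (e₀⊗e₀⊗e₀⊗e₀ + e₁⊗e₁⊗e₀⊗e₀ + e₁⊗e₁⊗e₁⊗e₁)/√3 in EuclideanSpace ℂ ((Fin 2 × Fin 2) × (Fin 2 × Fin 2)) (tensor factors ordered S_A, L_A, S_B, L_B), and let ok = (e₀⊗e₀ − e₁⊗e₁)/√2 in EuclideanSpace ℂ (Fin 2 × Fin 2). Then ⟪ok⊗ok, ψ^{t=2}⟫ = 1/(2√3), and hence the Born probability |⟪ok⊗ok, ψ^{t=2}⟫|² = 1/12 > 0. -/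

import Mathlib

open scoped InnerProductSpace

noncomputable section

/-- Standard basis vectors `e₀, e₁` of `ℂ²`. -/
def e (a : Fin 2) : EuclideanSpace ℂ (Fin 2) := EuclideanSpace.single a 1

/-- Twofold product vector: `(eₐ⊗e_b)(j,k) = eₐ(j)·e_b(k)`. -/
def tp2 (φ χ : EuclideanSpace ℂ (Fin 2)) :
    EuclideanSpace ℂ (Fin 2 × Fin 2) :=
  WithLp.toLp 2 (fun p => φ p.1 * χ p.2)

/-- Product of two two-qubit vectors:
`(φ⊗χ)((j,k),(l,m)) = φ(j,k)·χ(l,m)`. -/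
def tpPair (φ χ : EuclideanSpace ℂ (Fin 2 × Fin 2)) :
    EuclideanSpace ℂ ((Fin 2 × Fin 2) × (Fin 2 × Fin 2)) :=
  WithLp.toLp 2 (fun p => φ p.1 * χ p.2)

/-- State of the Frauchiger–Renner protocol after the friends' measurements
are modelled unitarily (tensor factors ordered `S_A, L_A, S_B, L_B`). -/
def ψt2 : EuclideanSpace ℂ ((Fin 2 × Fin 2) × (Fin 2 × Fin 2)) :=
  (Real.sqrt 3 : ℂ)⁻¹ •
    (tpPair (tp2 (e 0) (e 0)) (tp2 (e 0) (e 0)) +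
      tpPair (tp2 (e 1) (e 1)) (tp2 (e 0) (e 0)) +
      tpPair (tp2 (e 1) (e 1)) (tp2 (e 1) (e 1)))

/-- The superobservers' supermeasurement basis vector
`ok = (e₀⊗e₀ − e₁⊗e₁)/√2`. -/
def ok : EuclideanSpace ℂ (Fin 2 × Fin 2) :=
  (Real.sqrt 2 : ℂ)⁻¹ • (tp2 (e 0) (e 0) - tp2 (e 1) (e 1))

/-- The post-selected event of the Frauchiger–Renner paradox (both
superobservers obtain `ok`) has amplitude `1/(2√3)` and hence Born
probability `1/12 > 0`. -/
theorem fr_postselection_probability :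
    ⟪tpPair ok ok, ψt2⟫_ℂ = 1 / (2 * Real.sqrt 3) ∧
    ‖⟪tpPair ok ok, ψt2⟫_ℂ‖ ^ 2 = 1 / 12 ∧
    0 < ‖⟪tpPair ok ok, ψt2⟫_ℂ‖ ^ 2 := by
  have h2 : ((Real.sqrt 2 : ℂ))⁻¹ * (Real.sqrt 2 : ℂ)⁻¹ = 2⁻¹ := by
    rw [← mul_inv]
    norm_num [← Complex.ofReal_mul, Real.mul_self_sqrt]
  have h : ⟪tpPair ok ok, ψt2⟫_ℂ = 1 / (2 * Real.sqrt 3) := by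
    rw [PiLp.inner_apply]
    simp only [Fintype.sum_prod_type, Fin.sum_univ_two, tpPair, tp2, e, ok, ψt2,
      EuclideanSpace.single_apply, PiLp.smul_apply, PiLp.add_apply, PiLp.sub_apply,
      smul_eq_mul, map_mul, map_inv₀, Complex.conj_ofReal]
    norm_num
    ring_nf
    rw [sq, h2]; ring
  have hn : ‖⟪tpPair ok ok, ψt2⟫_ℂ‖ ^ 2 = 1 / 12 := by
    rw [h]
    have h3 : (0:ℝ) ≤ Real.sqrt 3 := Real.sqrt_nonneg 3
    rw [norm_div, norm_mul, Complex.norm_real, Real.norm_of_nonneg h3]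
    simp [div_pow, mul_pow, Real.sq_sqrt]
    norm_num
  exact ⟨h, hn, by rw [hn]; norm_num⟩
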